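/- arXiv:1702.08536 — 6 statements merged into one kernel-verified Lean document; each statement's English description precedes it below -/
import Mathlib

section
/- Let σ > 0, μ1 > μ0, φ ∈ (0,1), and let f0, f1 be the probability density functions of the normal distributions N(μ0, σ²) and N(μ1, σ²) respectively. Define g : ℝ → ℝ by g(x) = φ·f1(x) / (φ·f1(x) + (1−φ)·f0(x)). Then g is strictly monotone increasing on ℝ. -/
open ProbabilityTheory Real

/-- If the two classes emit normally distributed signals with equal variance σ²
(σ > 0), means μ0 < μ1, and prior probability φ ∈ (0,1) of the positive class,
then the discriminant transformation
g(x) = φ·f1(x) / (φ·f1(x) + (1−φ)·f0(x)) is strictly monotone increasing on ℝ. -/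
theorem discriminant_strictMono
    (σ μ0 μ1 φ : ℝ) (hσ : 0 < σ) (hμ : μ0 < μ1) (hφ : φ ∈ Set.Ioo (0 : ℝ) 1)
    (f0 f1 g : ℝ → ℝ)
    (hf0 : f0 = gaussianPDFReal μ0 ⟨σ ^ 2, sq_nonneg σ⟩)
    (hf1 : f1 = gaussianPDFReal μ1 ⟨σ ^ 2, sq_nonneg σ⟩)
    (hg : ∀ x, g x = φ * f1 x / (φ * f1 x + (1 - φ) * f0 x)) :
    StrictMono g := by
  obtain ⟨hφ0, hφ1⟩ := hφ
  have hπ := Real.pi_pos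
  have hC : 0 < (Real.sqrt (2 * π * (σ^2)))⁻¹ := by positivity
  have hv : (0:ℝ) < 2 * σ^2 := by positivity
  have hf : ∀ μ t, gaussianPDFReal μ ⟨σ ^ 2, sq_nonneg σ⟩ t
      = (Real.sqrt (2 * π * (σ^2)))⁻¹ * Real.exp (-(t - μ)^2 / (2 * σ^2)) := by
    intro μ t
    simp [gaussianPDFReal]
    rfl
  have hpos0 : ∀ t, 0 < f0 t := by intro t; rw [hf0, hf]; positivity
  have hpos1 : ∀ t, 0 < f1 t := by intro t; rw [hf1, hf]; positivity
  intro x y hxy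
  have hkey : f1 x * f0 y < f1 y * f0 x := by
    rw [hf0, hf1, hf, hf, hf, hf]
    have hexp : (-(x - μ1)^2 / (2 * σ^2) + -(y - μ0)^2 / (2 * σ^2))
        < (-(y - μ1)^2 / (2 * σ^2) + -(x - μ0)^2 / (2 * σ^2)) := by
      rw [← add_div, ← add_div, div_lt_div_iff_of_pos_right hv]
      nlinarith [mul_pos (sub_pos.2 hxy) (sub_pos.2 hμ)]
    have h1 : Real.exp (-(x - μ1)^2 / (2 * σ^2)) * Real.exp (-(y - μ0)^2 / (2 * σ^2))
        < Real.exp (-(y - μ1)^2 / (2 * σ^2)) * Real.exp (-(x - μ0)^2 / (2 * σ^2)) := by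
      rw [← Real.exp_add, ← Real.exp_add]
      exact Real.exp_lt_exp.2 hexp
    nlinarith [mul_pos hC hC]
  rw [hg x, hg y]
  have hd1 : 0 < φ * f1 x + (1 - φ) * f0 x := by
    have := hpos0 x; have := hpos1 x; nlinarith
  have hd2 : 0 < φ * f1 y + (1 - φ) * f0 y := by
    have := hpos0 y; have := hpos1 y; nlinarith
  rw [div_lt_div_iff₀ hd1 hd2]
  nlinarith [mul_pos hφ0 (sub_pos.2 hφ1), hkey, hpos0 x, hpos0 y, hpos1 x, hpos1 y]
end

section
/- Let σ0, σ1 > 0 with σ0 ≠ σ1, μ1 > μ0, φ ∈ (0,1), and let f0, f1 be the probability density functions of N(μ0, σ0²) and N(μ1, σ1²) respectively. Define g : ℝ → ℝ by g(x) = φ·f1(x) / (φ·f1(x) + (1−φ)·f0(x)). Then g is not monotone on ℝ (g is neither monotone nondecreasing nor monotone nonincreasing). -/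
open ProbabilityTheory Real

lemma key_mono
    (σ0 σ1 μ0 μ1 φ : ℝ) (hσ0 : 0 < σ0) (hσ1 : 0 < σ1)
    (hφ : φ ∈ Set.Ioo (0 : ℝ) 1)
    (f0 f1 g : ℝ → ℝ)
    (hf0 : f0 = gaussianPDFReal μ0 ⟨σ0 ^ 2, sq_nonneg σ0⟩)
    (hf1 : f1 = gaussianPDFReal μ1 ⟨σ1 ^ 2, sq_nonneg σ1⟩)
    (hg : ∀ x, g x = φ * f1 x / (φ * f1 x + (1 - φ) * f0 x))
    (x y : ℝ)
    (hq : (x - μ0)^2 * (2*σ0^2)⁻¹ - (x - μ1)^2 * (2*σ1^2)⁻¹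
        < (y - μ0)^2 * (2*σ0^2)⁻¹ - (y - μ1)^2 * (2*σ1^2)⁻¹) :
    g x < g y := by
  obtain ⟨hφ0, hφ1⟩ := hφ
  have h1φ : 0 < 1 - φ := by linarith
  have hv0 : ((⟨σ0 ^ 2, sq_nonneg σ0⟩ : NNReal)) ≠ 0 := by
    exact ne_of_gt (by change (0:ℝ) < σ0 ^ 2; positivity)
  have hv1 : ((⟨σ1 ^ 2, sq_nonneg σ1⟩ : NNReal)) ≠ 0 := by
    exact ne_of_gt (by change (0:ℝ) < σ1 ^ 2; positivity)
  have hf0p : ∀ z, 0 < f0 z := fun z => hf0 ▸ gaussianPDFReal_pos _ _ _ hv0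
  have hf1p : ∀ z, 0 < f1 z := fun z => hf1 ▸ gaussianPDFReal_pos _ _ _ hv1
  -- reduce to f1 x * f0 y < f1 y * f0 x
  have hcore : f1 x * f0 y < f1 y * f0 x := by
    rw [hf0, hf1]
    simp only [gaussianPDFReal, NNReal.coe_mk]
    change (√(2 * π * σ1 ^ 2))⁻¹ * rexp (-(x - μ1)^2 / (2 * σ1 ^ 2)) * ((√(2 * π * σ0 ^ 2))⁻¹ * rexp (-(y - μ0)^2 / (2 * σ0 ^ 2))) < (√(2 * π * σ1 ^ 2))⁻¹ * rexp (-(y - μ1)^2 / (2 * σ1 ^ 2)) * ((√(2 * π * σ0 ^ 2))⁻¹ * rexp (-(x - μ0)^2 / (2 * σ0 ^ 2)))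
    have heq : ∀ a b : ℝ,
        (√(2 * π * σ1 ^ 2))⁻¹ * rexp (-(a - μ1)^2 / (2 * σ1 ^ 2)) *
        ((√(2 * π * σ0 ^ 2))⁻¹ * rexp (-(b - μ0)^2 / (2 * σ0 ^ 2))) =
        ((√(2 * π * σ1 ^ 2))⁻¹ * (√(2 * π * σ0 ^ 2))⁻¹) *
        rexp (-(a - μ1)^2 / (2 * σ1^2) + -(b - μ0)^2 / (2 * σ0^2)) := by
      intro a b
      rw [Real.exp_add]; ring
    rw [heq, heq]
    have hc : (0:ℝ) < (√(2 * π * σ1 ^ 2))⁻¹ * (√(2 * π * σ0 ^ 2))⁻¹ := by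
      have h1 : (0:ℝ) < 2 * π * σ1^2 := by positivity
      have h2 : (0:ℝ) < 2 * π * σ0^2 := by positivity
      positivity
    apply mul_lt_mul_of_pos_left _ hc
    apply Real.exp_lt_exp.mpr
    simp only [div_eq_mul_inv, neg_mul]
    linarith
  rw [hg x, hg y]
  have hDx := add_pos (mul_pos hφ0 (hf1p x)) (mul_pos h1φ (hf0p x))
  have hDy := add_pos (mul_pos hφ0 (hf1p y)) (mul_pos h1φ (hf0p y))
  rw [div_lt_div_iff₀ hDx hDy]
  have := hf0p x; have := hf0p y; have := hf1p x; have := hf1p y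
  nlinarith [mul_pos hφ0 h1φ, hcore]

/-- If the two classes emit normally distributed signals with unequal variances
σ0² ≠ σ1² (σ0, σ1 > 0), means μ0 < μ1, and prior probability φ ∈ (0,1) of the
positive class, then the discriminant transformation
g(x) = φ·f1(x) / (φ·f1(x) + (1−φ)·f0(x)) is not monotone on ℝ. -/
theorem discriminant_not_monotone
    (σ0 σ1 μ0 μ1 φ : ℝ) (hσ0 : 0 < σ0) (hσ1 : 0 < σ1) (hσ : σ0 ≠ σ1)
    (hμ : μ0 < μ1) (hφ : φ ∈ Set.Ioo (0 : ℝ) 1)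
    (f0 f1 g : ℝ → ℝ)
    (hf0 : f0 = gaussianPDFReal μ0 ⟨σ0 ^ 2, sq_nonneg σ0⟩)
    (hf1 : f1 = gaussianPDFReal μ1 ⟨σ1 ^ 2, sq_nonneg σ1⟩)
    (hg : ∀ x, g x = φ * f1 x / (φ * f1 x + (1 - φ) * f0 x)) :
    ¬ Monotone g ∧ ¬ Antitone g := by
  set q : ℝ → ℝ := fun x => (x - μ0)^2 * (2*σ0^2)⁻¹ - (x - μ1)^2 * (2*σ1^2)⁻¹ with hqdef
  have key : ∀ x y : ℝ, q x < q y → g x < g y := fun x y h =>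
    key_mono σ0 σ1 μ0 μ1 φ hσ0 hσ1 hφ f0 f1 g hf0 hf1 hg x y h
  have hd : σ1^2 - σ0^2 ≠ 0 := by
    intro h; apply hσ; nlinarith
  set d := σ1^2 - σ0^2 with hddef
  set v := (μ0*σ1^2 - μ1*σ0^2)/d with hvdef
  set A := d/(2*σ0^2*σ1^2) with hAdef
  have hs0 : σ0^2 ≠ 0 := by positivity
  have hs1 : σ1^2 ≠ 0 := by positivity
  have hA : A ≠ 0 := by
    simp only [hAdef]
    intro h
    apply hd
    field_simp at h
    simpa using h
  have hdiff : ∀ s t : ℝ, q (v + t) - q (v + s) = A * (t^2 - s^2) := by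
    intro s t
    have hd' : σ1^2 - σ0^2 ≠ 0 := hd
    simp only [hqdef, hvdef, hAdef, hddef]
    field_simp
    ring
  rcases lt_or_gt_of_ne hA with hAn | hAp
  · constructor
    · intro hm
      have h1 : q (v + 2) < q (v + 1) := by have := hdiff 1 2; nlinarith
      have := key _ _ h1
      have := hm (show v + 1 ≤ v + 2 by linarith)
      linarith
    · intro hm
      have h1 : q (v + (-2)) < q (v + (-1)) := by have := hdiff (-1) (-2); nlinarith
      have := key _ _ h1
      have := hm (show v + (-2) ≤ v + (-1) by linarith)
      linarith
  · constructor
    · intro hm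
      have h1 : q (v + (-1)) < q (v + (-2)) := by have := hdiff (-2) (-1); nlinarith
      have := key _ _ h1
      have := hm (show v + (-2) ≤ v + (-1) by linarith)
      linarith
    · intro hm
      have h1 : q (v + 1) < q (v + 2) := by have := hdiff 2 1; nlinarith
      have := key _ _ h1
      have := hm (show v + 1 ≤ v + 2 by linarith)
      linarith
end

section
/- Let σ0, σ1 > 0 with σ1 > σ0, μ1 > μ0, φ ∈ (0,1), and let f0, f1 be the probability density functions of N(μ0, σ0²) and N(μ1, σ1²). Define g(x) = φ·f1(x) / (φ·f1(x) + (1−φ)·f0(x)). Then g(x) tends to 1 both as x → +∞ and as x → −∞. Symmetrically, if σ1 < σ0, then g(x) tends to 0 both as x → +∞ and as x → −∞. -/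
open ProbabilityTheory Real Filter

private lemma sqshift_atTop (e : ℝ) : Tendsto (fun x : ℝ => (x+e)^2) atTop atTop :=
  (tendsto_pow_atTop two_ne_zero).comp (tendsto_atTop_add_const_right _ e tendsto_id)

private lemma sqshift_atBot (e : ℝ) : Tendsto (fun x : ℝ => (x+e)^2) atBot atTop := by
  have h : Tendsto (fun x : ℝ => -(x+e)) atBot atTop :=
    (tendsto_neg_atBot_atTop).comp (tendsto_atBot_add_const_right _ e tendsto_id)
  have h2 : Tendsto (fun x : ℝ => (-(x+e))^2) atBot atTop :=
    (tendsto_pow_atTop two_ne_zero).comp h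
  exact h2.congr fun x => by ring

private lemma quad_key (a b d : ℝ) (ha : a ≠ 0) (x : ℝ) :
    a*x^2 + b*x + d = a*(x + b/(2*a))^2 + (d - b^2/(4*a)) := by
  field_simp
  ring

private lemma quad_atBot (a b d : ℝ) (ha : a < 0) (l : Filter ℝ)
    (hl : Tendsto (fun x : ℝ => (x + b/(2*a))^2) l atTop) :
    Tendsto (fun x => a*x^2 + b*x + d) l atBot :=
  (tendsto_atBot_add_const_right _ _ (hl.const_mul_atTop_of_neg ha)).congr
    fun x => (quad_key a b d ha.ne x).symm

private lemma quad_atTop (a b d : ℝ) (ha : 0 < a) (l : Filter ℝ)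
    (hl : Tendsto (fun x : ℝ => (x + b/(2*a))^2) l atTop) :
    Tendsto (fun x => a*x^2 + b*x + d) l atTop :=
  (tendsto_atTop_add_const_right _ _ (hl.const_mul_atTop ha)).congr
    fun x => (quad_key a b d ha.ne' x).symm

/-- For unequal variances, the discriminant transformation
g(x) = φ·f1(x) / (φ·f1(x) + (1−φ)·f0(x)) has the same limit at +∞ and −∞:
if σ1 > σ0 it tends to 1 at both ends, and if σ1 < σ0 it tends to 0 at both ends. -/
theorem discriminant_limits
    (σ0 σ1 μ0 μ1 φ : ℝ) (hσ0 : 0 < σ0) (hσ1 : 0 < σ1)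
    (hμ : μ0 < μ1) (hφ : φ ∈ Set.Ioo (0 : ℝ) 1)
    (f0 f1 g : ℝ → ℝ)
    (hf0 : f0 = gaussianPDFReal μ0 ⟨σ0 ^ 2, sq_nonneg σ0⟩)
    (hf1 : f1 = gaussianPDFReal μ1 ⟨σ1 ^ 2, sq_nonneg σ1⟩)
    (hg : ∀ x, g x = φ * f1 x / (φ * f1 x + (1 - φ) * f0 x)) :
    (σ0 < σ1 →
      Tendsto g atTop (nhds 1) ∧ Tendsto g atBot (nhds 1)) ∧
    (σ1 < σ0 →
      Tendsto g atTop (nhds 0) ∧ Tendsto g atBot (nhds 0)) := by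
  obtain ⟨hφ0, hφ1⟩ := hφ
  have hφ1' : 0 < 1 - φ := by linarith
  have hs0 : (0:ℝ) < σ0^2 := by positivity
  have hs1 : (0:ℝ) < σ1^2 := by positivity
  have hf0pos : ∀ x, 0 < f0 x := by
    intro x; rw [hf0]
    exact gaussianPDFReal_pos _ _ _ (fun h => hs0.ne' (congrArg Subtype.val h :))
  have hf1pos : ∀ x, 0 < f1 x := by
    intro x; rw [hf1]
    exact gaussianPDFReal_pos _ _ _ (fun h => hs1.ne' (congrArg Subtype.val h :))
  set a : ℝ := 1/(2*σ1^2) - 1/(2*σ0^2) with ha_def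
  set b : ℝ := μ0/σ0^2 - μ1/σ1^2 with hb_def
  set d : ℝ := μ1^2/(2*σ1^2) - μ0^2/(2*σ0^2) with hd_def
  set c : ℝ := ((1-φ) * Real.sqrt (2*π*σ1^2))/(φ * Real.sqrt (2*π*σ0^2)) with hc_def
  have hS0 : 0 < Real.sqrt (2*π*σ0^2) := Real.sqrt_pos.mpr (by positivity)
  have hS1 : 0 < Real.sqrt (2*π*σ1^2) := Real.sqrt_pos.mpr (by positivity)
  have hc : 0 < c := by positivity
  set r : ℝ → ℝ := fun x => c * Real.exp (a*x^2 + b*x + d) with hr_def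
  have hgr : ∀ x, g x = (1 + r x)⁻¹ := by
    intro x
    have hE : a*x^2 + b*x + d =
        (-(x-μ0)^2/(2*σ0^2)) - (-(x-μ1)^2/(2*σ1^2)) := by
      rw [ha_def, hb_def, hd_def]
      field_simp
      ring
    have hrx : r x = ((1-φ) * f0 x)/(φ * f1 x) := by
      rw [hr_def]
      simp only [hE, Real.exp_sub, hf0, hf1, gaussianPDFReal, NNReal.coe_mk]
      rw [hc_def]
      have e1 : Real.exp (-(x-μ0)^2/(2*σ0^2)) ≠ 0 := (Real.exp_pos _).ne'
      have e2 : Real.exp (-(x-μ1)^2/(2*σ1^2)) ≠ 0 := (Real.exp_pos _).ne'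
      change _ = (1 - φ) * ((Real.sqrt (2 * π * σ0^2))⁻¹ * Real.exp (-(x - μ0) ^ 2 / (2 * σ0^2))) /
        (φ * ((Real.sqrt (2 * π * σ1^2))⁻¹ * Real.exp (-(x - μ1) ^ 2 / (2 * σ1^2))))
      field_simp
    rw [hg x, hrx]
    have h1 : φ * f1 x ≠ 0 := (mul_pos hφ0 (hf1pos x)).ne'
    have h2 : φ * f1 x + (1 - φ) * f0 x ≠ 0 :=
      (add_pos (mul_pos hφ0 (hf1pos x)) (mul_pos hφ1' (hf0pos x))).ne'
    have h3 : f1 x ≠ 0 := (hf1pos x).ne'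
    field_simp
  have ha0 : σ0 < σ1 → a < 0 := by
    intro h
    have h2 : σ0^2 < σ1^2 := by nlinarith
    have : 1/(2*σ1^2) < 1/(2*σ0^2) :=
      one_div_lt_one_div_of_lt (by positivity) (by linarith)
    rw [ha_def]; linarith
  have ha1 : σ1 < σ0 → 0 < a := by
    intro h
    have h2 : σ1^2 < σ0^2 := by nlinarith
    have : 1/(2*σ0^2) < 1/(2*σ1^2) :=
      one_div_lt_one_div_of_lt (by positivity) (by linarith)
    rw [ha_def]; linarith
  constructor
  · intro h
    have ha := ha0 h
    have hq : ∀ l : Filter ℝ, Tendsto (fun x : ℝ => (x + b/(2*a))^2) l atTop →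
        Tendsto g l (nhds 1) := by
      intro l hl
      have hqb := quad_atBot a b d ha l hl
      have hexp : Tendsto (fun x => Real.exp (a*x^2+b*x+d)) l (nhds 0) :=
        Real.tendsto_exp_atBot.comp hqb
      have hr0 : Tendsto r l (nhds 0) := by
        rw [hr_def]; simpa using hexp.const_mul c
      have h1 : Tendsto (fun x => 1 + r x) l (nhds 1) := by
        simpa using (tendsto_const_nhds.add hr0)
      have : Tendsto (fun x => (1 + r x)⁻¹) l (nhds 1) := by
        simpa using h1.inv₀ one_ne_zero
      exact this.congr fun x => (hgr x).symm
    exact ⟨hq atTop (sqshift_atTop _), hq atBot (sqshift_atBot _)⟩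
  · intro h
    have ha := ha1 h
    have hq : ∀ l : Filter ℝ, Tendsto (fun x : ℝ => (x + b/(2*a))^2) l atTop →
        Tendsto g l (nhds 0) := by
      intro l hl
      have hqb := quad_atTop a b d ha l hl
      have hexp : Tendsto (fun x => Real.exp (a*x^2+b*x+d)) l atTop :=
        Real.tendsto_exp_atTop.comp hqb
      have hrT : Tendsto r l atTop := by
        rw [hr_def]; exact hexp.const_mul_atTop hc
      have : Tendsto (fun x => (1 + r x)⁻¹) l (nhds 0) :=
        tendsto_inv_atTop_zero.comp (tendsto_atTop_add_const_left _ 1 hrT)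
      exact this.congr fun x => (hgr x).symm
    exact ⟨hq atTop (sqshift_atTop _), hq atBot (sqshift_atBot _)⟩
end

section
/- Let φ ∈ (0,1), σ, σ' > 0, μ1 > μ0, μ1' > μ0', and suppose (μ1 − μ0)/σ = (μ1' − μ0')/σ'. Let P be the Gaussian mixture measure (1−φ)·N(μ0, σ²) + φ·N(μ1, σ²) on ℝ and P' the mixture (1−φ)·N(μ0', σ'²) + φ·N(μ1', σ'²). Let g(x) = φ·f1(x)/(φ·f1(x) + (1−φ)·f0(x)) where f0, f1 are the densities of N(μ0, σ²), N(μ1, σ²), and define g' analogously from μ0', μ1', σ'. Then the pushforward of P under g equals the pushforward of P' under g': the two discriminant distributions are identical. -/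
open ProbabilityTheory Real MeasureTheory

/-- Proposition 2 (2-parameter representation): two homoskedastic discriminant
distributions with the same class prior φ and the same normalized separation
δ = (μ1 − μ0)/σ are identical, i.e. the pushforwards of the two Gaussian
mixtures under their respective discriminant transformations coincide. -/
theorem discriminant_two_parameter
    (φ σ σ' μ0 μ1 μ0' μ1' : ℝ)
    (hφ : φ ∈ Set.Ioo (0 : ℝ) 1)
    (hσ : 0 < σ) (hσ' : 0 < σ')
    (hμ : μ0 < μ1) (hμ' : μ0' < μ1')
    (hδ : (μ1 - μ0) / σ = (μ1' - μ0') / σ')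
    (f0 f1 f0' f1' g g' : ℝ → ℝ)
    (hf0 : f0 = gaussianPDFReal μ0 ⟨σ ^ 2, sq_nonneg σ⟩)
    (hf1 : f1 = gaussianPDFReal μ1 ⟨σ ^ 2, sq_nonneg σ⟩)
    (hf0' : f0' = gaussianPDFReal μ0' ⟨σ' ^ 2, sq_nonneg σ'⟩)
    (hf1' : f1' = gaussianPDFReal μ1' ⟨σ' ^ 2, sq_nonneg σ'⟩)
    (hg : ∀ x, g x = φ * f1 x / (φ * f1 x + (1 - φ) * f0 x))
    (hg' : ∀ x, g' x = φ * f1' x / (φ * f1' x + (1 - φ) * f0' x))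
    (P P' : Measure ℝ)
    (hP : P = ENNReal.ofReal (1 - φ) • gaussianReal μ0 ⟨σ ^ 2, sq_nonneg σ⟩
            + ENNReal.ofReal φ • gaussianReal μ1 ⟨σ ^ 2, sq_nonneg σ⟩)
    (hP' : P' = ENNReal.ofReal (1 - φ) • gaussianReal μ0' ⟨σ' ^ 2, sq_nonneg σ'⟩
            + ENNReal.ofReal φ • gaussianReal μ1' ⟨σ' ^ 2, sq_nonneg σ'⟩) :
    Measure.map g P = Measure.map g' P' := by
  obtain ⟨hφ0, hφ1⟩ := hφ
  set c : ℝ := σ' / σ with hc_def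
  have hc : 0 < c := div_pos hσ' hσ
  -- the affine transfer map
  set T : ℝ → ℝ := fun x => c * x + (μ0' - c * μ0) with hT_def
  have hμ1' : μ1' = c * μ1 + (μ0' - c * μ0) := by
    have h : (μ1 - μ0) * σ' = (μ1' - μ0') * σ := by
      field_simp at hδ
      linarith [hδ]
    have hσne : σ ≠ 0 := ne_of_gt hσ
    have hcσ : c * σ = σ' := by rw [hc_def]; exact div_mul_cancel₀ σ' hσne
    apply mul_right_cancel₀ hσne
    linear_combination -h - (μ1 - μ0) * hcσ
  have hTsub0 : ∀ x, T x - μ0' = c * (x - μ0) := by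
    intro x; simp only [hT_def]; ring
  have hTsub1 : ∀ x, T x - μ1' = c * (x - μ1) := by
    intro x; simp only [hT_def, hμ1']; ring
  have hc2 : c ^ 2 * σ ^ 2 = σ' ^ 2 := by
    rw [hc_def, div_pow, div_mul_cancel₀ _ (pow_ne_zero 2 hσ.ne')]
  -- variance identity for the pushforward of gaussians
  have hvar : (⟨c ^ 2, sq_nonneg c⟩ * ⟨σ ^ 2, sq_nonneg σ⟩ : NNReal)
      = ⟨σ' ^ 2, sq_nonneg σ'⟩ := by
    ext
    exact hc2
  have hTmeas : Measurable T := (measurable_id.const_mul c).add_const _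
  have hmapT : ∀ μ : ℝ, Measure.map T (gaussianReal μ ⟨σ ^ 2, sq_nonneg σ⟩)
      = gaussianReal (c * μ + (μ0' - c * μ0)) ⟨σ' ^ 2, sq_nonneg σ'⟩ := by
    intro μ
    have h1 : Measure.map T (gaussianReal μ ⟨σ ^ 2, sq_nonneg σ⟩)
        = Measure.map (· + (μ0' - c * μ0))
            (Measure.map (c * ·) (gaussianReal μ ⟨σ ^ 2, sq_nonneg σ⟩)) := by
      rw [Measure.map_map (measurable_add_const _) (measurable_const_mul c)]
      rfl
    rw [h1, gaussianReal_map_const_mul (μ := μ) (v := ⟨σ ^ 2, sq_nonneg σ⟩), gaussianReal_map_add_const]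
    exact congrArg _ hvar
  -- pointwise exponent identities
  have hpdf0 : ∀ x, f0' (T x) = (√(2 * π * σ' ^ 2))⁻¹ * rexp (- (x - μ0)^2 / (2 * σ ^ 2)) := by
    intro x
    rw [hf0']
    unfold gaussianPDFReal
    show (√(2 * π * σ' ^ 2))⁻¹ * rexp (-(T x - μ0') ^ 2 / (2 * σ' ^ 2)) = _
    rw [hTsub0]
    congr 1
    congr 1
    rw [mul_pow]
    have hσne : (σ:ℝ) ^ 2 ≠ 0 := by positivity
    have hσ'ne : (σ':ℝ) ^ 2 ≠ 0 := by positivity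
    field_simp
    nlinarith [hc2, sq_nonneg (x - μ0)]
  have hpdf1 : ∀ x, f1' (T x) = (√(2 * π * σ' ^ 2))⁻¹ * rexp (- (x - μ1)^2 / (2 * σ ^ 2)) := by
    intro x
    rw [hf1']
    unfold gaussianPDFReal
    show (√(2 * π * σ' ^ 2))⁻¹ * rexp (-(T x - μ1') ^ 2 / (2 * σ' ^ 2)) = _
    rw [hTsub1]
    congr 1
    congr 1
    rw [mul_pow]
    have hσne : (σ:ℝ) ^ 2 ≠ 0 := by positivity
    have hσ'ne : (σ':ℝ) ^ 2 ≠ 0 := by positivity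
    field_simp
    nlinarith [hc2, sq_nonneg (x - μ1)]
  -- g = g' ∘ T
  have hgT : ∀ x, g x = g' (T x) := by
    intro x
    rw [hg, hg']
    have hK : (0:ℝ) < (√(2 * π * σ ^ 2))⁻¹ := by
      rw [inv_pos]
      apply Real.sqrt_pos.2
      positivity
    have hK' : (0:ℝ) < (√(2 * π * σ' ^ 2))⁻¹ := by
      rw [inv_pos]
      apply Real.sqrt_pos.2
      positivity
    have hf0x : f0 x = (√(2 * π * σ ^ 2))⁻¹ * rexp (- (x - μ0)^2 / (2 * σ ^ 2)) := by
      rw [hf0]; unfold gaussianPDFReal; rfl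
    have hf1x : f1 x = (√(2 * π * σ ^ 2))⁻¹ * rexp (- (x - μ1)^2 / (2 * σ ^ 2)) := by
      rw [hf1]; unfold gaussianPDFReal; rfl
    rw [hf0x, hf1x, hpdf0 x, hpdf1 x]
    set E0 : ℝ := rexp (- (x - μ0)^2 / (2 * σ ^ 2)) with hE0
    set E1 : ℝ := rexp (- (x - μ1)^2 / (2 * σ ^ 2)) with hE1
    have hE0p : 0 < E0 := Real.exp_pos _
    have hE1p : 0 < E1 := Real.exp_pos _
    set K : ℝ := (√(2 * π * σ ^ 2))⁻¹
    set K' : ℝ := (√(2 * π * σ' ^ 2))⁻¹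
    have h1φ : (0:ℝ) < 1 - φ := by linarith
    have hden : 0 < φ * (K * E1) + (1 - φ) * (K * E0) :=
      add_pos (mul_pos hφ0 (mul_pos hK hE1p)) (mul_pos h1φ (mul_pos hK hE0p))
    have hden' : 0 < φ * (K' * E1) + (1 - φ) * (K' * E0) :=
      add_pos (mul_pos hφ0 (mul_pos hK' hE1p)) (mul_pos h1φ (mul_pos hK' hE0p))
    rw [div_eq_div_iff (ne_of_gt hden) (ne_of_gt hden')]
    ring
  have hmf0 : Measurable f0 := hf0 ▸ measurable_gaussianPDFReal _ _
  have hmf1 : Measurable f1 := hf1 ▸ measurable_gaussianPDFReal _ _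
  have hmf0' : Measurable f0' := hf0' ▸ measurable_gaussianPDFReal _ _
  have hmf1' : Measurable f1' := hf1' ▸ measurable_gaussianPDFReal _ _
  have hg'meas : Measurable g' := by
    have : g' = fun x => φ * f1' x / (φ * f1' x + (1 - φ) * f0' x) := funext hg'
    rw [this]
    exact ((hmf1'.const_mul φ).div ((hmf1'.const_mul φ).add (hmf0'.const_mul (1 - φ))))
  have hmapTP : Measure.map T P = P' := by
    rw [hP, hP', Measure.map_add _ _ hTmeas, Measure.map_smul, Measure.map_smul,
      hmapT, hmapT, ← hμ1']
    have h0 : c * μ0 + (μ0' - c * μ0) = μ0' := by ring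
    rw [h0]
  have hgeq : g = g' ∘ T := funext fun x => hgT x
  rw [hgeq, ← Measure.map_map hg'meas hTmeas, hmapTP]
end

section
/- Let φ ∈ (0,1), δ > 0, let g(x) = 1 / (1 + ((1−φ)/φ)·exp(−δx + δ²/2)), and let X be a random variable with the mixture law (1−φ)·N(0,1) + φ·N(δ,1). Then for every t ∈ (0,1), E[g(X) | g(X) > t] = φ·Φ̄(c − δ) / ((1−φ)·Φ̄(c) + φ·Φ̄(c − δ)), where c = g⁻¹(t) = (log(t/(1−t)) − log(φ/(1−φ)))/δ + δ/2 and Φ̄(z) = 1 − Φ(z) is the complementary CDF of the standard normal distribution. -/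
open ProbabilityTheory Real MeasureTheory

/-- Conditional mean (hit rate) of the discriminant distribution disc(φ,δ):
for X with the mixture law (1−φ)·N(0,1) + φ·N(δ,1) and every t ∈ (0,1),
E[g(X) | g(X) > t] = φ·Φ̄(c − δ) / ((1−φ)·Φ̄(c) + φ·Φ̄(c − δ)), where
c = g⁻¹(t) = (logit(t) − logit(φ))/δ + δ/2 and Φ̄ is the standard normal
complementary CDF. -/
theorem discriminant_conditional_mean
    (φ δ : ℝ) (hφ : φ ∈ Set.Ioo (0 : ℝ) 1) (hδ : 0 < δ)
    (g : ℝ → ℝ)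
    (hg : ∀ x, g x = 1 / (1 + ((1 - φ) / φ) * Real.exp (-δ * x + δ ^ 2 / 2)))
    (μ : Measure ℝ)
    (hμ : μ = ENNReal.ofReal (1 - φ) • gaussianReal 0 1
            + ENNReal.ofReal φ • gaussianReal δ 1)
    (Φc : ℝ → ℝ)
    (hΦc : ∀ z, Φc z = 1 - ((gaussianReal 0 1) (Set.Iic z)).toReal) :
    ∀ t ∈ Set.Ioo (0 : ℝ) 1,
      (∫ x in {x : ℝ | g x > t}, g x ∂μ) / (μ {x : ℝ | g x > t}).toReal =
        φ * Φc ((Real.log (t / (1 - t)) - Real.log (φ / (1 - φ))) / δ + δ / 2 - δ) /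
          ((1 - φ) * Φc ((Real.log (t / (1 - t)) - Real.log (φ / (1 - φ))) / δ + δ / 2)
            + φ * Φc ((Real.log (t / (1 - t)) - Real.log (φ / (1 - φ))) / δ + δ / 2 - δ)) := by
  obtain ⟨hφ0, hφ1⟩ := hφ
  have hφ1' : 0 < 1 - φ := by linarith
  have hA : 0 < (1 - φ) / φ := div_pos hφ1' hφ0
  have hD : ∀ x : ℝ, 0 < 1 + (1 - φ) / φ * Real.exp (-δ * x + δ ^ 2 / 2) := by
    intro x
    have := mul_pos hA (Real.exp_pos (-δ * x + δ ^ 2 / 2))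
    linarith
  have hgfun : g = fun x => 1 / (1 + (1 - φ) / φ * Real.exp (-δ * x + δ ^ 2 / 2)) :=
    funext hg
  have hgcont : Continuous g := by
    rw [hgfun]
    exact continuous_const.div (by continuity) (fun x => (hD x).ne')
  have hgm : Measurable g := hgcont.measurable
  have hg0 : ∀ x, 0 ≤ g x := by
    intro x; rw [hg]; positivity
  have hpdf : ∀ m x : ℝ, gaussianPDFReal m 1 x = (Real.sqrt (2 * π))⁻¹ *
      Real.exp (-(x - m) ^ 2 / 2) := by
    intro m x
    simp [gaussianPDFReal]
  -- the key pointwise identity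
  have key : ∀ x, g x * ((1 - φ) * gaussianPDFReal 0 1 x + φ * gaussianPDFReal δ 1 x)
      = φ * gaussianPDFReal δ 1 x := by
    intro x
    rw [hg, hpdf, hpdf]
    have hE : Real.exp (-(x - 0) ^ 2 / 2)
        = Real.exp (-(x - δ) ^ 2 / 2) * Real.exp (-δ * x + δ ^ 2 / 2) := by
      rw [← Real.exp_add]; ring_nf
    rw [div_mul_eq_mul_div, div_eq_iff (hD x).ne', hE]
    field_simp
    ring
  intro t ht
  obtain ⟨ht0, ht1⟩ := ht
  have ht1' : 0 < 1 - t := by linarith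
  set c : ℝ := (Real.log (t / (1 - t)) - Real.log (φ / (1 - φ))) / δ + δ / 2 with hc
  set s : Set ℝ := Set.Ioi c with hs
  have hsm : MeasurableSet s := measurableSet_Ioi
  -- the superlevel set is Ioi c
  have hset : {x : ℝ | g x > t} = s := by
    ext x
    clear_value s c
    simp only [Set.mem_setOf_eq, gt_iff_lt, hs, Set.mem_Ioi, hg]
    have hDx := hD x
    rw [lt_div_iff₀ hDx]
    have h2 : t * (1 + (1 - φ) / φ * Real.exp (-δ * x + δ ^ 2 / 2)) < 1 ↔
        (1 - φ) / φ * Real.exp (-δ * x + δ ^ 2 / 2) < (1 - t) / t := by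
      rw [lt_div_iff₀ ht0]
      constructor <;> intro h <;> nlinarith
    rw [h2]
    have h3 : (1 - φ) / φ * Real.exp (-δ * x + δ ^ 2 / 2) < (1 - t) / t ↔
        Real.log ((1 - φ) / φ * Real.exp (-δ * x + δ ^ 2 / 2)) < Real.log ((1 - t) / t) := by
      rw [Real.log_lt_log_iff (by positivity)]
      exact div_pos ht1' ht0
    rw [h3, Real.log_mul hA.ne' (Real.exp_pos _).ne', Real.log_exp,
      Real.log_div hφ1'.ne' hφ0.ne', Real.log_div ht1'.ne' ht0.ne']
    have hcδ : c * δ = Real.log t - Real.log (1 - t) -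
        (Real.log φ - Real.log (1 - φ)) + δ ^ 2 / 2 := by
      rw [hc, Real.log_div ht0.ne' ht1'.ne', Real.log_div hφ0.ne' hφ1'.ne']
      field_simp
    constructor
    · intro h
      have hx : c * δ < x * δ := by nlinarith [mul_comm x δ]
      exact lt_of_mul_lt_mul_right (by linarith) hδ.le
    · intro h
      have hx : c * δ < x * δ := mul_lt_mul_of_pos_right h hδ
      nlinarith [mul_comm x δ]
  -- lintegral over each gaussian
  have hgm' : Measurable fun x => ENNReal.ofReal (g x) := hgm.ennreal_ofReal
  have hN : ∀ m : ℝ, ∫⁻ x in s, ENNReal.ofReal (g x) ∂(gaussianReal m 1)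
      = ∫⁻ x in s, ENNReal.ofReal (gaussianPDFReal m 1 x) * ENNReal.ofReal (g x) ∂volume := by
    intro m
    rw [gaussianReal_of_var_ne_zero m one_ne_zero, restrict_withDensity hsm,
      lintegral_withDensity_eq_lintegral_mul _ (measurable_gaussianPDF m 1) hgm']
    rfl
  have hmeas0 : Measurable fun x =>
      ENNReal.ofReal (1 - φ) * (ENNReal.ofReal (gaussianPDFReal 0 1 x) * ENNReal.ofReal (g x)) :=
    (((measurable_gaussianPDFReal 0 1).ennreal_ofReal.mul hgm')).const_mul _
  have hlin : ∫⁻ x in s, ENNReal.ofReal (g x) ∂μ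
      = ENNReal.ofReal φ * gaussianReal δ 1 s := by
    rw [hμ, Measure.restrict_add, Measure.restrict_smul, Measure.restrict_smul,
      lintegral_add_measure, lintegral_smul_measure, lintegral_smul_measure, hN 0, hN δ, smul_eq_mul, smul_eq_mul,
      ← lintegral_const_mul' _ _ ENNReal.ofReal_ne_top,
      ← lintegral_const_mul' _ _ ENNReal.ofReal_ne_top,
      ← lintegral_add_left hmeas0]
    have heq : ∀ x : ℝ,
        ENNReal.ofReal (1 - φ) * (ENNReal.ofReal (gaussianPDFReal 0 1 x) * ENNReal.ofReal (g x))
        + ENNReal.ofReal φ * (ENNReal.ofReal (gaussianPDFReal δ 1 x) * ENNReal.ofReal (g x))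
        = ENNReal.ofReal (φ * gaussianPDFReal δ 1 x) := by
      intro x
      rw [← ENNReal.ofReal_mul (gaussianPDFReal_nonneg 0 1 x),
        ← ENNReal.ofReal_mul (gaussianPDFReal_nonneg δ 1 x),
        ← ENNReal.ofReal_mul hφ1'.le, ← ENNReal.ofReal_mul hφ0.le,
        ← ENNReal.ofReal_add (mul_nonneg hφ1'.le (mul_nonneg (gaussianPDFReal_nonneg 0 1 x) (hg0 x)))
          (mul_nonneg hφ0.le (mul_nonneg (gaussianPDFReal_nonneg δ 1 x) (hg0 x)))]
      congr 1
      linear_combination key x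
    rw [lintegral_congr heq]
    simp_rw [ENNReal.ofReal_mul hφ0.le]
    rw [lintegral_const_mul' _ _ ENNReal.ofReal_ne_top, gaussianReal_apply δ one_ne_zero s]
    rfl
  -- numerator
  have hnum : ∫ x in s, g x ∂μ = φ * (gaussianReal δ 1 s).toReal := by
    rw [integral_eq_lintegral_of_nonneg_ae (ae_of_all _ hg0)
      hgcont.aestronglyMeasurable.restrict, hlin, ENNReal.toReal_mul,
      ENNReal.toReal_ofReal hφ0.le]
  -- denominator
  have hden : (μ s).toReal
      = (1 - φ) * (gaussianReal 0 1 s).toReal + φ * (gaussianReal δ 1 s).toReal := by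
    rw [hμ]
    simp only [Measure.add_apply, Measure.smul_apply, smul_eq_mul]
    rw [ENNReal.toReal_add (by finiteness) (by finiteness), ENNReal.toReal_mul,
      ENNReal.toReal_mul, ENNReal.toReal_ofReal hφ1'.le, ENNReal.toReal_ofReal hφ0.le]
  -- complementary CDF values
  have hΦof : ∀ z : ℝ, Φc z = (gaussianReal 0 1 (Set.Ioi z)).toReal := by
    intro z
    rw [hΦc, ← Set.compl_Iic, prob_compl_eq_one_sub measurableSet_Iic,
      ENNReal.toReal_sub_of_le prob_le_one ENNReal.one_ne_top, ENNReal.toReal_one]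
  have hΦ1 : Φc c = (gaussianReal 0 1 s).toReal := hΦof c
  have hΦ2 : Φc (c - δ) = (gaussianReal δ 1 s).toReal := by
    have hmap : gaussianReal δ 1 = (gaussianReal 0 1).map (· + δ) := by
      rw [gaussianReal_map_add_const, zero_add]
    rw [hΦof (c - δ), hmap, Measure.map_apply (measurable_add_const δ) hsm]
    congr 2
    ext x
    simp [hs, sub_lt_iff_lt_add]
  rw [hset, hnum, hden, hΦ1, hΦ2]
end

section
/- Let φ ∈ (0,1), δ > 0, let g(x) = 1 / (1 + ((1−φ)/φ)·exp(−δx + δ²/2)), and let logit(p) = log(p/(1−p)). Let P be the Gaussian mixture measure (1−φ)·N(0,1) + φ·N(δ,1) on ℝ. Then the pushforward of P under the map x ↦ logit(g(x)) equals the Gaussian mixture measure (1−φ)·N(m, δ²) + φ·N(m + δ², δ²), where m = log(φ/(1−φ)) − δ²/2. Consequently the discriminant distribution disc(φ, δ) is a two-component logit-normal mixture distribution. -/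
open ProbabilityTheory Real MeasureTheory

/-- Discriminant distributions are logit-normal mixtures: the pushforward of the
Gaussian mixture (1−φ)·N(0,1) + φ·N(δ,1) under x ↦ logit(g(x)) equals the
Gaussian mixture (1−φ)·N(m, δ²) + φ·N(m + δ², δ²), where
m = log(φ/(1−φ)) − δ²/2. -/
theorem discriminant_logit_normal_mixture
    (φ δ : ℝ) (hφ : φ ∈ Set.Ioo (0 : ℝ) 1) (hδ : 0 < δ)
    (g : ℝ → ℝ)
    (hg : ∀ x, g x = 1 / (1 + ((1 - φ) / φ) * Real.exp (-δ * x + δ ^ 2 / 2)))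
    (P : Measure ℝ)
    (hP : P = ENNReal.ofReal (1 - φ) • gaussianReal 0 1
            + ENNReal.ofReal φ • gaussianReal δ 1)
    (m : ℝ) (hm : m = Real.log (φ / (1 - φ)) - δ ^ 2 / 2) :
    Measure.map (fun x => Real.log (g x / (1 - g x))) P =
      ENNReal.ofReal (1 - φ) • gaussianReal m ⟨δ ^ 2, sq_nonneg δ⟩
        + ENNReal.ofReal φ • gaussianReal (m + δ ^ 2) ⟨δ ^ 2, sq_nonneg δ⟩ := by
  obtain ⟨hφ0, hφ1⟩ := hφ
  have hc : 0 < (1 - φ) / φ := div_pos (by linarith) hφ0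
  -- the map is the affine map x ↦ δ * x + m
  have hfun : (fun x => Real.log (g x / (1 - g x))) = fun x => δ * x + m := by
    funext x
    have hE : (0:ℝ) < ((1 - φ) / φ) * Real.exp (-δ * x + δ ^ 2 / 2) :=
      mul_pos hc (Real.exp_pos _)
    have h1 : (0:ℝ) < 1 + ((1 - φ) / φ) * Real.exp (-δ * x + δ ^ 2 / 2) := by linarith
    set E := ((1 - φ) / φ) * Real.exp (-δ * x + δ ^ 2 / 2) with hEdef
    have hgx : g x = 1 / (1 + E) := hg x
    have h1g : 1 - g x = E / (1 + E) := by
      rw [hgx]; field_simp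
      ring
    have hratio : g x / (1 - g x) = E⁻¹ := by
      rw [h1g, hgx]
      field_simp
    rw [hratio, hEdef, Real.log_inv, Real.log_mul (ne_of_gt hc) (Real.exp_ne_zero _),
      Real.log_exp, hm, Real.log_div hφ0.ne' (by linarith : (1:ℝ) - φ ≠ 0),
      Real.log_div (by linarith : (1:ℝ) - φ ≠ 0) hφ0.ne']
    ring
  rw [hfun, hP]
  have hmeas : Measurable (fun x : ℝ => δ * x + m) :=
    (measurable_id.const_mul δ).add_const m
  rw [Measure.map_add _ _ hmeas, Measure.map_smul, Measure.map_smul]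
  have hmap : ∀ μ0 : ℝ, Measure.map (fun x : ℝ => δ * x + m) (gaussianReal μ0 1)
      = gaussianReal (δ * μ0 + m) ⟨δ ^ 2, sq_nonneg δ⟩ := by
    intro μ0
    have : (fun x : ℝ => δ * x + m) = (fun y => y + m) ∘ (fun x => δ * x) := rfl
    rw [this, ← Measure.map_map (measurable_id'.add_const m) (measurable_id'.const_mul δ),
      gaussianReal_map_const_mul, gaussianReal_map_add_const]
    congr 1
    ext
    simp
    rfl
  rw [hmap 0, hmap δ, mul_zero, zero_add, ← sq]
  ring_nf
end
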